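/- Let t̄ < T be real numbers, β ∈ (0,1), λ ∈ ℝ, ρ > 0, let ν : [t̄, T] → (0,∞) be continuous and Γ : [t̄, T] → [0,∞) be continuous. Then ∫_{t̄}^T e^{λ(s−t̄)} ν(s) ( Γ(s) e^{−∫_{t̄}^s Γ(τ) dτ} )^β ds + e^{λ(T−t̄)} ρ e^{−β ∫_{t̄}^T Γ(τ) dτ} ≤ ( ∫_{t̄}^T e^{(λ/(1−β))(s−t̄)} ν(s)^{1/(1−β)} ds + e^{(λ/(1−β))(T−t̄)} ρ^{1/(1−β)} )^{1−β}. -/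

import Mathlib

open MeasureTheory Set


/-- Two-term Hölder: `a^(1-β) b^β + c^(1-β) d^β ≤ (a+c)^(1-β) (b+d)^β`. -/
lemma holder2_aux {a b c d β : ℝ} (ha : 0 ≤ a) (hb : 0 ≤ b) (hc : 0 ≤ c) (hd : 0 ≤ d)
    (hβ0 : 0 < β) (hβ1 : β < 1) :
    a ^ (1-β) * b ^ β + c ^ (1-β) * d ^ β ≤ (a+c) ^ (1-β) * (b+d) ^ β := by
  have h1β : 0 < 1 - β := by linarith
  have hpq : Real.HolderConjugate (1/(1-β)) (1/β) := by
    simpa only [one_div] using Real.HolderConjugate.inv_inv h1β hβ0 (by ring)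
  have key1 : ∀ x : ℝ, 0 ≤ x → |x ^ (1-β)| ^ (1/(1-β)) = x := fun x hx => by
    rw [abs_of_nonneg (Real.rpow_nonneg hx _), ← Real.rpow_mul hx,
      mul_one_div_cancel h1β.ne', Real.rpow_one]
  have key2 : ∀ x : ℝ, 0 ≤ x → |x ^ β| ^ (1/β) = x := fun x hx => by
    rw [abs_of_nonneg (Real.rpow_nonneg hx _), ← Real.rpow_mul hx,
      mul_one_div_cancel hβ0.ne', Real.rpow_one]
  have H := Real.inner_le_Lp_mul_Lq (Finset.univ)
    ![a ^ (1-β), c ^ (1-β)] ![b ^ β, d ^ β] hpq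
  simp only [Fin.sum_univ_two, Matrix.cons_val_zero, Matrix.cons_val_one, Matrix.head_cons] at H
  rw [key1 a ha, key1 c hc, key2 b hb, key2 d hd, one_div_one_div, one_div_one_div] at H
  exact H



lemma statement17_aux (tb T β lam ρ : ℝ) (htT : tb < T)
    (hβ0 : 0 < β) (hβ1 : β < 1) (hρ : 0 < ρ)
    (ν Γ : ℝ → ℝ)
    (hνc : Continuous ν) (hνpos : ∀ s, 0 < ν s)
    (hΓc : Continuous Γ) (hΓnn : ∀ s, 0 ≤ Γ s) :
    (∫ s in tb..T,
        Real.exp (lam * (s - tb)) * ν s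
          * (Γ s * Real.exp (-∫ τ in tb..s, Γ τ)) ^ β)
      + Real.exp (lam * (T - tb)) * ρ * Real.exp (-β * ∫ τ in tb..T, Γ τ)
    ≤ ((∫ s in tb..T,
          Real.exp (lam / (1 - β) * (s - tb)) * ν s ^ (1 / (1 - β)))
        + Real.exp (lam / (1 - β) * (T - tb)) * ρ ^ (1 / (1 - β))) ^ (1 - β) := by
  have h1β : 0 < 1 - β := by linarith
  set G : ℝ → ℝ := fun s => ∫ τ in tb..s, Γ τ with hGdef
  have hGderiv : ∀ s : ℝ, HasDerivAt G (Γ s) s := fun s =>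
    intervalIntegral.integral_hasDerivAt_right (hΓc.intervalIntegrable _ _)
      (hΓc.stronglyMeasurable.stronglyMeasurableAtFilter) hΓc.continuousAt
  have hGcont : Continuous G :=
    (Differentiable.continuous fun s => (hGderiv s).differentiableAt)
  have hGTnn : 0 ≤ G T := intervalIntegral.integral_nonneg htT.le fun τ _ => hΓnn τ
  -- FTC: ∫ Γ e^{-G} = 1 - e^{-G T}
  have hFTC : (∫ s in tb..T, Γ s * Real.exp (-G s)) = 1 - Real.exp (-G T) := by
    have hderiv : ∀ s ∈ Set.uIcc tb T,
        HasDerivAt (fun u => -Real.exp (-G u)) (Γ s * Real.exp (-G s)) s := by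
      intro s _
      have h2 : HasDerivAt (fun u => Real.exp (-G u)) (Real.exp (-G s) * -Γ s) s :=
        ((hGderiv s).neg).exp
      have h3 := h2.neg
      rw [show Γ s * Real.exp (-G s) = -(Real.exp (-G s) * -Γ s) by ring]
      exact h3
    have hint : IntervalIntegrable (fun s => Γ s * Real.exp (-G s)) volume tb T :=
      (hΓc.mul (hGcont.neg.rexp)).intervalIntegrable _ _
    rw [intervalIntegral.integral_eq_sub_of_hasDerivAt hderiv hint]
    have : G tb = 0 := intervalIntegral.integral_same
    rw [this]
    simp only [neg_zero, Real.exp_zero]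
    ring
  -- the two functions for Hölder
  set f : ℝ → ℝ := fun s => Real.exp (lam * (s - tb)) * ν s with hfdef
  set g : ℝ → ℝ := fun s => (Γ s * Real.exp (-G s)) ^ β with hgdef
  have hfc : Continuous f := (Real.continuous_exp.comp (by fun_prop)).mul hνc
  have hgc : Continuous g := (hΓc.mul (hGcont.neg.rexp)).rpow_const fun s => Or.inr hβ0.le
  have hfnn : ∀ s, 0 ≤ f s := fun s => mul_nonneg (Real.exp_pos _).le (hνpos s).le
  have hgnn : ∀ s, 0 ≤ g s := fun s => Real.rpow_nonneg
    (mul_nonneg (hΓnn s) (Real.exp_pos _).le) _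
  set μ : Measure ℝ := volume.restrict (Set.Ioc tb T) with hμdef
  haveI : IsFiniteMeasure μ := by
    constructor
    rw [hμdef, Measure.restrict_apply_univ]
    exact measure_Ioc_lt_top
  have memp : ∀ (h : ℝ → ℝ), Continuous h → ∀ r : ENNReal, MemLp h r μ := by
    intro h hh r
    obtain ⟨C, hC⟩ := (isCompact_Icc (a := tb) (b := T)).exists_bound_of_continuousOn
      hh.continuousOn
    refine MemLp.of_bound hh.aestronglyMeasurable C ?_
    rw [hμdef]
    exact (ae_restrict_iff' measurableSet_Ioc).2
      (Filter.Eventually.of_forall fun x hx => hC x (Set.Ioc_subset_Icc_self hx))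
  have hpq : Real.HolderConjugate (1/(1-β)) (1/β) := by
    simpa only [one_div] using Real.HolderConjugate.inv_inv h1β hβ0 (by ring)
  have holder := MeasureTheory.integral_mul_le_Lp_mul_Lq_of_nonneg hpq
    (Filter.Eventually.of_forall hfnn) (Filter.Eventually.of_forall hgnn)
    (memp f hfc _) (memp g hgc _)
  -- rewrite the three integrals in `holder` as interval integrals and simplify powers
  have hfe : ∀ s : ℝ, f s ^ (1/(1-β)) =
      Real.exp (lam / (1 - β) * (s - tb)) * ν s ^ (1 / (1 - β)) := by
    intro s
    rw [hfdef]
    rw [Real.mul_rpow (Real.exp_pos _).le (hνpos s).le, ← Real.exp_mul]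
    congr 2
    ring
  have hge : ∀ s : ℝ, g s ^ (1/β) = Γ s * Real.exp (-G s) := by
    intro s
    rw [hgdef]
    rw [← Real.rpow_mul (mul_nonneg (hΓnn s) (Real.exp_pos _).le),
      mul_one_div_cancel hβ0.ne', Real.rpow_one]
  have hIoc : ∀ F : ℝ → ℝ, (∫ s, F s ∂μ) = ∫ s in tb..T, F s := by
    intro F
    rw [intervalIntegral.integral_of_le htT.le, hμdef]
  rw [show (∫ a, f a * g a ∂μ) = ∫ s in tb..T, f s * g s from hIoc _,
    show (∫ a, f a ^ (1/(1-β)) ∂μ) = ∫ s in tb..T, f s ^ (1/(1-β)) from hIoc _,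
    show (∫ a, g a ^ (1/β) ∂μ) = ∫ s in tb..T, g s ^ (1/β) from hIoc _,
    one_div_one_div, one_div_one_div] at holder
  rw [intervalIntegral.integral_congr (g := fun s => Γ s * Real.exp (-G s))
    (fun s _ => hge s)] at holder
  rw [intervalIntegral.integral_congr
    (g := fun s => Real.exp (lam / (1 - β) * (s - tb)) * ν s ^ (1 / (1 - β)))
    (fun s _ => hfe s)] at holder
  rw [hFTC] at holder
  -- abbreviations
  set A : ℝ := ∫ s in tb..T, Real.exp (lam / (1 - β) * (s - tb)) * ν s ^ (1 / (1 - β)) with hA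
  set B : ℝ := Real.exp (lam / (1 - β) * (T - tb)) * ρ ^ (1 / (1 - β)) with hB
  have hAnn : 0 ≤ A := by
    refine intervalIntegral.integral_nonneg htT.le fun s _ => ?_
    exact mul_nonneg (Real.exp_pos _).le (Real.rpow_nonneg (hνpos s).le _)
  have hBnn : 0 ≤ B := mul_nonneg (Real.exp_pos _).le (Real.rpow_nonneg hρ.le _)
  have hdnn : (0:ℝ) ≤ Real.exp (-G T) := (Real.exp_pos _).le
  have hbnn : (0:ℝ) ≤ 1 - Real.exp (-G T) := by
    have : Real.exp (-G T) ≤ 1 := Real.exp_le_one_iff.2 (by linarith)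
    linarith
  -- second term equals B^(1-β) * (e^{-G T})^β
  have hterm2 : Real.exp (lam * (T - tb)) * ρ * Real.exp (-β * G T)
      = B ^ (1-β) * (Real.exp (-G T)) ^ β := by
    have e1 : lam / (1 - β) * (T - tb) * (1 - β) = lam * (T - tb) := by field_simp
    have e2 : -G T * β = -β * G T := by ring
    rw [hB, Real.mul_rpow (Real.exp_pos _).le (Real.rpow_nonneg hρ.le _),
      ← Real.exp_mul, ← Real.exp_mul,
      ← Real.rpow_mul hρ.le, one_div_mul_cancel h1β.ne', Real.rpow_one, e1, e2]
  calc (∫ s in tb..T, f s * g s) + Real.exp (lam * (T - tb)) * ρ * Real.exp (-β * G T)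
      ≤ A ^ (1-β) * (1 - Real.exp (-G T)) ^ β + B ^ (1-β) * (Real.exp (-G T)) ^ β := by
        rw [hterm2]; exact add_le_add_left holder _
    _ ≤ (A + B) ^ (1-β) * ((1 - Real.exp (-G T)) + Real.exp (-G T)) ^ β :=
        holder2_aux hAnn hbnn hBnn hdnn hβ0 hβ1
    _ = (A + B) ^ (1-β) := by
        rw [show (1 - Real.exp (-G T)) + Real.exp (-G T) = 1 by ring, Real.one_rpow, mul_one]


/-- The key Hölder-type estimate of the generalized Merton problem:
for `t̄ < T`, `β ∈ (0,1)`, `λ ∈ ℝ`, `ρ > 0`, `ν` continuous positive and `Γ`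
continuous nonnegative on `[t̄, T]`,
`∫_{t̄}^T e^{λ(s-t̄)} ν(s) (Γ(s) e^{-∫_{t̄}^s Γ})^β ds + e^{λ(T-t̄)} ρ e^{-β∫_{t̄}^T Γ}
  ≤ (∫_{t̄}^T e^{(λ/(1-β))(s-t̄)} ν(s)^{1/(1-β)} ds + e^{(λ/(1-β))(T-t̄)} ρ^{1/(1-β)})^{1-β}`. -/
theorem statement17 (tb T β lam ρ : ℝ) (htT : tb < T)
    (hβ : β ∈ Set.Ioo (0 : ℝ) 1) (hρ : 0 < ρ)
    (ν Γ : ℝ → ℝ)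
    (hνc : ContinuousOn ν (Set.Icc tb T)) (hνpos : ∀ s ∈ Set.Icc tb T, 0 < ν s)
    (hΓc : ContinuousOn Γ (Set.Icc tb T)) (hΓnn : ∀ s ∈ Set.Icc tb T, 0 ≤ Γ s) :
    (∫ s in tb..T,
        Real.exp (lam * (s - tb)) * ν s
          * (Γ s * Real.exp (-∫ τ in tb..s, Γ τ)) ^ β)
      + Real.exp (lam * (T - tb)) * ρ * Real.exp (-β * ∫ τ in tb..T, Γ τ)
    ≤ ((∫ s in tb..T,
          Real.exp (lam / (1 - β) * (s - tb)) * ν s ^ (1 / (1 - β)))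
        + Real.exp (lam / (1 - β) * (T - tb)) * ρ ^ (1 / (1 - β))) ^ (1 - β) := by
  obtain ⟨hβ0, hβ1⟩ := hβ
  set proj : ℝ → ℝ := fun s => max tb (min s T) with hproj
  have hprojc : Continuous proj := continuous_const.max (continuous_id.min continuous_const)
  have hmem : ∀ s, proj s ∈ Set.Icc tb T :=
    fun s => ⟨le_max_left _ _, max_le htT.le (min_le_right _ _)⟩
  have hid : ∀ s ∈ Set.Icc tb T, proj s = s := by
    intro s hs
    rw [hproj]
    simp only [min_eq_left hs.2, max_eq_right hs.1]
  set ν' : ℝ → ℝ := fun s => ν (proj s) with hν'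
  set Γ' : ℝ → ℝ := fun s => Γ (proj s) with hΓ'
  have hν'c : Continuous ν' := hνc.comp_continuous hprojc hmem
  have hΓ'c : Continuous Γ' := hΓc.comp_continuous hprojc hmem
  have hν'pos : ∀ s, 0 < ν' s := fun s => hνpos _ (hmem s)
  have hΓ'nn : ∀ s, 0 ≤ Γ' s := fun s => hΓnn _ (hmem s)
  have hν'eq : ∀ s ∈ Set.Icc tb T, ν' s = ν s := fun s hs => by simp only [hν']; rw [hid s hs]
  have hΓ'eq : ∀ s ∈ Set.Icc tb T, Γ' s = Γ s := fun s hs => by simp only [hΓ']; rw [hid s hs]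
  -- inner integrals agree
  have hGeq : ∀ s ∈ Set.Icc tb T, (∫ τ in tb..s, Γ τ) = ∫ τ in tb..s, Γ' τ := by
    intro s hs
    refine intervalIntegral.integral_congr fun τ hτ => ?_
    rw [Set.uIcc_of_le hs.1] at hτ
    exact (hΓ'eq τ (Set.Icc_subset_Icc_right hs.2 hτ)).symm
  have hL : (∫ s in tb..T,
        Real.exp (lam * (s - tb)) * ν s * (Γ s * Real.exp (-∫ τ in tb..s, Γ τ)) ^ β)
      = ∫ s in tb..T,
        Real.exp (lam * (s - tb)) * ν' s * (Γ' s * Real.exp (-∫ τ in tb..s, Γ' τ)) ^ β := by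
    refine intervalIntegral.integral_congr fun s hs => ?_
    rw [Set.uIcc_of_le htT.le] at hs
    rw [hν'eq s hs, hΓ'eq s hs, hGeq s hs]
  have hR : (∫ s in tb..T, Real.exp (lam / (1 - β) * (s - tb)) * ν s ^ (1 / (1 - β)))
      = ∫ s in tb..T, Real.exp (lam / (1 - β) * (s - tb)) * ν' s ^ (1 / (1 - β)) := by
    refine intervalIntegral.integral_congr fun s hs => ?_
    rw [Set.uIcc_of_le htT.le] at hs
    rw [hν'eq s hs]
  rw [hL, hR, hGeq T ⟨htT.le, le_refl T⟩]
  exact statement17_aux tb T β lam ρ htT hβ0 hβ1 hρ ν' Γ' hν'c hν'pos hΓ'c hΓ'nn
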